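/- Let A be a terminating ARRIVAL instance with |V| = n, layer decomposition L_i = {v ∈ V ∪ {d,d̄} : dist(v) = i} where dist(v) is the shortest-path distance from v to {d, d̄} in G(A), and let φ ∈ (0,1). Consider the greedy procedure: S ← ∅, U ← L_0; for i = 1,...,ℓ, if |L_i| < φ|U| then add L_i to S and reset U ← ∅; in any case add L_i to U. Then the resulting set S satisfies |S| ≤ φ(n+2), and for every v ∈ V the shortest path from v to S ∪ {d, d̄} in G(A) has length at most log₂(n+2)/φ. -/

import Mathlib

variable {V : Type} [Fintype V] [DecidableEq V]

/-- An ARRIVAL instance: origin `o` and two successor functions into `V ⊕ Bool`,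
where `Sum.inr false` is the destination `d` and `Sum.inr true` is `d̄`. -/
structure Arrival (V : Type) where
  o : V
  sEven : V → V ⊕ Bool
  sOdd : V → V ⊕ Bool

/-- Destination predicate. -/
def DestP {V : Type} : V ⊕ Bool → Prop := fun u => ∃ t, u = Sum.inr t

/-- Edge relation of the switch graph (proper edges only). -/
def Arrival.Edge (A : Arrival V) (u w : V ⊕ Bool) : Prop :=
  ∃ x : V, u = Sum.inl x ∧ (w = A.sEven x ∨ w = A.sOdd x)

/-- There is a directed walk of length `m` from `u` to a vertex satisfying `P`. -/
def Arrival.PathLen (A : Arrival V) (u : V ⊕ Bool) (P : V ⊕ Bool → Prop) (m : ℕ) : Prop :=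
  ∃ f : ℕ → V ⊕ Bool, f 0 = u ∧ P (f m) ∧ ∀ i < m, A.Edge (f i) (f (i + 1))

/-- `m` is the length of a shortest directed path from `u` to a vertex satisfying `P`. -/
def Arrival.ShortestLen (A : Arrival V) (u : V ⊕ Bool) (P : V ⊕ Bool → Prop) (m : ℕ) : Prop :=
  A.PathLen u P m ∧ ∀ m' < m, ¬ A.PathLen u P m'

/-- The instance is terminating: from every vertex a destination is reachable. -/
def Arrival.Terminating (A : Arrival V) : Prop :=
  ∀ v : V, ∃ m, A.PathLen (Sum.inl v) DestP m

/-- One step of the run procedure on states (position, switch configuration);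
`false` means the current successor is the even one. Destinations are absorbing. -/
def Arrival.runStep [DecidableEq V] (A : Arrival V) :
    (V ⊕ Bool) × (V → Bool) → (V ⊕ Bool) × (V → Bool) := fun s =>
  match s.1 with
  | Sum.inr _ => s
  | Sum.inl v => ((if s.2 v then A.sOdd v else A.sEven v),
      fun u => if u = v then !s.2 v else s.2 u)

/-- The state of the run procedure after `k` proper steps (the train starts at `o`). -/
def Arrival.run [DecidableEq V] (A : Arrival V) (k : ℕ) : (V ⊕ Bool) × (V → Bool) :=
  A.runStep^[k] (Sum.inl A.o, fun _ => false)

open Classical in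
/-- The greedy ball-growing procedure on the layer decomposition:
`greedy L φ i = (S, U)` after processing layers `1,...,i`. -/
noncomputable def greedy {V : Type} [DecidableEq V]
    (L : ℕ → Finset (V ⊕ Bool)) (φ : ℝ) : ℕ → Finset (V ⊕ Bool) × Finset (V ⊕ Bool)
  | 0 => (∅, L 0)
  | (i + 1) =>
      let p := greedy L φ i
      if ((L (i + 1)).card : ℝ) < φ * (p.2.card : ℝ) then (p.1 ∪ L (i + 1), L (i + 1))
      else (p.1, p.2 ∪ L (i + 1))

open Finset

section AuxLemmas
variable {V : Type} [DecidableEq V]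

lemma greedy_succ (L : ℕ → Finset (V ⊕ Bool)) (φ : ℝ) (i : ℕ) :
    greedy L φ (i + 1) =
      if ((L (i + 1)).card : ℝ) < φ * ((greedy L φ i).2.card : ℝ)
      then ((greedy L φ i).1 ∪ L (i + 1), L (i + 1))
      else ((greedy L φ i).1, (greedy L φ i).2 ∪ L (i + 1)) := by
  rw [greedy]

lemma greedy_mono (L : ℕ → Finset (V ⊕ Bool)) (φ : ℝ) {i j : ℕ} (h : i ≤ j) :
    (greedy L φ i).1 ⊆ (greedy L φ j).1 := by
  induction j with
  | zero => simp [Nat.le_zero.mp h]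
  | succ j ih =>
    rcases Nat.lt_or_ge i (j + 1) with h' | h'
    · refine (ih (Nat.lt_succ_iff.mp h')).trans ?_
      rw [greedy_succ]
      split
      · exact subset_union_left
      · exact subset_rfl
    · have : i = j + 1 := le_antisymm h h'
      subst this; exact subset_rfl

lemma greedy_invariant (L : ℕ → Finset (V ⊕ Bool)) (φ : ℝ) (hφ : 0 < φ)
    (hdisj : ∀ i j, i ≠ j → Disjoint (L i) (L j)) (i : ℕ) :
    (greedy L φ i).1 ⊆ (range (i + 1)).biUnion L ∧
    (greedy L φ i).2 ⊆ (range (i + 1)).biUnion L ∧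
    ((greedy L φ i).1.card : ℝ) + φ * ((greedy L φ i).2.card : ℝ)
      ≤ φ * (((range (i + 1)).biUnion L).card : ℝ) := by
  induction i with
  | zero => simp [greedy]
  | succ i ih =>
    obtain ⟨hS, hU, hc⟩ := ih
    have hdLT : Disjoint ((range (i + 1)).biUnion L) (L (i + 1)) := by
      rw [disjoint_biUnion_left]
      intro j hj
      exact hdisj _ _ (by simp at hj; omega)
    have hT : (range (i + 2)).biUnion L = (range (i + 1)).biUnion L ∪ L (i + 1) := by
      rw [range_add_one, biUnion_insert, union_comm]
    have hTcard : (((range (i + 2)).biUnion L).card : ℝ)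
        = (((range (i + 1)).biUnion L).card : ℝ) + ((L (i + 1)).card : ℝ) := by
      rw [hT, card_union_of_disjoint hdLT]; push_cast; ring
    rw [greedy_succ]
    by_cases hif : ((L (i + 1)).card : ℝ) < φ * ((greedy L φ i).2.card : ℝ)
    · rw [if_pos hif]
      have hdS : Disjoint (greedy L φ i).1 (L (i + 1)) :=
        Finset.disjoint_of_subset_left hS hdLT
      refine ⟨?_, ?_, ?_⟩
      · rw [hT]; exact union_subset_union hS subset_rfl
      · rw [hT]; exact subset_union_right
      · rw [card_union_of_disjoint hdS, hTcard]
        push_cast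
        nlinarith
    · rw [if_neg hif]
      refine ⟨?_, ?_, ?_⟩
      · rw [hT]; exact hS.trans subset_union_left
      · rw [hT]; exact union_subset_union hU subset_rfl
      · rw [hTcard]
        have h1 : ((((greedy L φ i).2 ∪ L (i + 1)).card : ℝ))
            ≤ ((greedy L φ i).2.card : ℝ) + ((L (i + 1)).card : ℝ) := by
          exact_mod_cast card_union_le _ _
        nlinarith

lemma greedy_growth (L : ℕ → Finset (V ⊕ Bool)) (φ : ℝ) (hφ : 0 < φ)
    (hdisj : ∀ i j, i ≠ j → Disjoint (L i) (L j)) (i : ℕ)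
    (hif : ¬ ((L (i + 1)).card : ℝ) < φ * ((greedy L φ i).2.card : ℝ)) :
    (1 + φ) * ((greedy L φ i).2.card : ℝ) ≤ ((greedy L φ (i + 1)).2.card : ℝ) := by
  have hU := (greedy_invariant L φ hφ hdisj i).2.1
  have hdLT : Disjoint ((range (i + 1)).biUnion L) (L (i + 1)) := by
    rw [disjoint_biUnion_left]
    intro j hj
    exact hdisj _ _ (by simp at hj; omega)
  have hd : Disjoint (greedy L φ i).2 (L (i + 1)) :=
    Finset.disjoint_of_subset_left hU hdLT
  rw [greedy_succ, if_neg hif]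
  simp only
  rw [card_union_of_disjoint hd]
  push_neg at hif
  push_cast
  nlinarith

lemma greedy_growth_iter (L : ℕ → Finset (V ⊕ Bool)) (φ : ℝ) (hφ : 0 < φ)
    (hdisj : ∀ i j, i ≠ j → Disjoint (L i) (L j)) (j k : ℕ)
    (h : ∀ t, j ≤ t → t < j + k → ¬ ((L (t + 1)).card : ℝ) < φ * ((greedy L φ t).2.card : ℝ)) :
    (1 + φ) ^ k * ((greedy L φ j).2.card : ℝ) ≤ ((greedy L φ (j + k)).2.card : ℝ) := by
  induction k with
  | zero => simp
  | succ k ih =>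
    have h2 := ih (fun t ht ht' => h t ht (by omega))
    have h1 := greedy_growth L φ hφ hdisj (j + k) (h (j + k) (by omega) (by omega))
    have hpos : (0:ℝ) ≤ 1 + φ := by linarith
    calc (1 + φ) ^ (k + 1) * ((greedy L φ j).2.card : ℝ)
        = (1 + φ) * ((1 + φ) ^ k * ((greedy L φ j).2.card : ℝ)) := by ring
      _ ≤ (1 + φ) * ((greedy L φ (j + k)).2.card : ℝ) :=
          mul_le_mul_of_nonneg_left h2 hpos
      _ ≤ ((greedy L φ (j + k + 1)).2.card : ℝ) := h1
      _ = ((greedy L φ (j + (k + 1))).2.card : ℝ) := by ring_nf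

end AuxLemmas

lemma pathlen_cons {V' : Type} (A : Arrival V') {u w : V' ⊕ Bool} {P : V' ⊕ Bool → Prop} {m : ℕ}
    (he : A.Edge u w) (hp : A.PathLen w P m) : A.PathLen u P (m + 1) := by
  obtain ⟨f, hf0, hfm, hfe⟩ := hp
  refine ⟨fun i => if i = 0 then u else f (i - 1), by simp, by simp [hfm], ?_⟩
  intro i hi
  match i with
  | 0 => simpa [hf0] using he
  | (j + 1) =>
    simp only [Nat.succ_ne_zero, if_false, Nat.add_sub_cancel]
    exact hfe j (by omega)

lemma dist_le_of_path {V' : Type} (A : Arrival V') {u : V' ⊕ Bool} {m : ℕ} (dist : V' ⊕ Bool → ℕ)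
    (hdist : ∀ u, A.ShortestLen u DestP (dist u)) (hp : A.PathLen u DestP m) : dist u ≤ m := by
  by_contra hlt
  exact (hdist u).2 m (by omega) hp

lemma dist_step {V' : Type} (A : Arrival V') (dist : V' ⊕ Bool → ℕ)
    (hdist : ∀ u, A.ShortestLen u DestP (dist u)) {u : V' ⊕ Bool} (h : 1 ≤ dist u) :
    ∃ w, A.Edge u w ∧ dist w = dist u - 1 := by
  obtain ⟨f, hf0, hfm, hfe⟩ := (hdist u).1
  refine ⟨f 1, hf0 ▸ hfe 0 h, ?_⟩
  have hle : dist (f 1) ≤ dist u - 1 := by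
    apply dist_le_of_path A dist hdist
    refine ⟨fun i => f (i + 1), rfl, ?_, fun i hi => hfe (i + 1) (by omega)⟩
    show DestP (f (dist u - 1 + 1))
    have h1 : dist u - 1 + 1 = dist u := by omega
    rw [h1]; exact hfm
  have hge : dist u ≤ dist (f 1) + 1 := by
    apply dist_le_of_path A dist hdist
    exact pathlen_cons A (hf0 ▸ hfe 0 h) (hdist (f 1)).1
  omega

lemma descend {V' : Type} (A : Arrival V') (dist : V' ⊕ Bool → ℕ)
    (hdist : ∀ u, A.ShortestLen u DestP (dist u)) :
    ∀ k (u : V' ⊕ Bool), k ≤ dist u → A.PathLen u (fun w => dist w = dist u - k) k := by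
  intro k
  induction k with
  | zero => intro u _; exact ⟨fun _ => u, rfl, by simp, by omega⟩
  | succ k ih =>
    intro u h
    obtain ⟨w, he, hw⟩ := dist_step A dist hdist (u := u) (by omega)
    have hp := ih w (by omega)
    have : (fun x => dist x = dist w - k) = (fun x => dist x = dist u - (k + 1)) := by
      funext x; simp only [eq_iff_iff]; omega
    rw [this] at hp
    exact pathlen_cons A he hp

open Finset Real in
/-- The greedy procedure produces a `φ`-set: `|S| ≤ φ(n+2)` and every vertex has a
path of length at most `log₂(n+2)/φ` to `S ∪ {d, d̄}`. -/
theorem greedy_phi_set (A : Arrival V) (hA : A.Terminating) (n ℓ : ℕ)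
    (hn : Fintype.card V = n) (φ : ℝ) (hφ0 : 0 < φ) (hφ1 : φ < 1)
    (dist : V ⊕ Bool → ℕ) (hdist : ∀ u : V ⊕ Bool, A.ShortestLen u DestP (dist u))
    (hℓ : ∀ u : V ⊕ Bool, dist u ≤ ℓ) :
    ∀ S : Finset (V ⊕ Bool),
      S = (greedy (fun i => Finset.univ.filter (fun u => dist u = i)) φ ℓ).1 →
      ((S.card : ℝ) ≤ φ * (n + 2)) ∧
        ∀ v : V, ∃ m : ℕ, A.PathLen (Sum.inl v) (fun u => u ∈ S ∨ DestP u) m ∧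
          (m : ℝ) ≤ Real.logb 2 (n + 2) / φ := by
  classical
  intro S hS
  set L : ℕ → Finset (V ⊕ Bool) := fun i => Finset.univ.filter (fun u => dist u = i) with hLdef
  have hdisj : ∀ i j, i ≠ j → Disjoint (L i) (L j) := by
    intro i j hij
    simp only [hLdef, Finset.disjoint_left, Finset.mem_filter]
    rintro a ⟨-, h1⟩ ⟨-, h2⟩
    omega
  have hmemL : ∀ u : V ⊕ Bool, u ∈ L (dist u) := by
    intro u; simp [hLdef]
  have hUniv : ∀ (T : Finset (V ⊕ Bool)), (T.card : ℝ) ≤ (n : ℝ) + 2 := by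
    intro T
    have h1 : T.card ≤ Fintype.card (V ⊕ Bool) := Finset.card_le_univ T
    have h2 : Fintype.card (V ⊕ Bool) = n + 2 := by
      simp [Fintype.card_sum, hn]
    rw [h2] at h1
    exact_mod_cast h1
  have inv := greedy_invariant L φ hφ0 hdisj ℓ
  have hUpos : (0:ℝ) ≤ φ * ((greedy L φ ℓ).2.card : ℝ) := by positivity
  constructor
  · rw [hS]
    have h1 := inv.2.2
    have h2 := hUniv ((range (ℓ + 1)).biUnion L)
    nlinarith [mul_le_mul_of_nonneg_left h2 hφ0.le]
  · intro v
    set i := dist (Sum.inl v) with hi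
    set pred : ℕ → Prop :=
      fun k => k = 0 ∨ (1 ≤ k ∧ ((L k).card : ℝ) < φ * ((greedy L φ (k - 1)).2.card : ℝ))
      with hpred
    set j := Nat.findGreatest pred i with hj
    have hj_le : j ≤ i := Nat.findGreatest_le i
    have hj_pred : pred j := Nat.findGreatest_spec (Nat.zero_le i) (Or.inl rfl)
    have hj_max : ∀ t, j < t → t ≤ i → ¬ pred t :=
      fun t h1 h2 => Nat.findGreatest_is_greatest h1 h2
    have hil : i ≤ ℓ := hℓ _
    have hUj : (greedy L φ j).2 = L j := by
      rcases hj_pred with h0 | ⟨h1, h2⟩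
      · rw [h0]; simp [greedy]
      · obtain ⟨j', hjj⟩ : ∃ j', j = j' + 1 := ⟨j - 1, by omega⟩
        rw [hjj, greedy_succ, if_pos (by rw [hjj] at h2; simpa using h2)]
    obtain ⟨f, hf0, hfe_end, hfe⟩ := descend A dist hdist (i - j) (Sum.inl v) (by omega)
    rw [← hi] at hfe_end
    have hdw : dist (f (i - j)) = j := by omega
    have hend : f (i - j) ∈ S ∨ DestP (f (i - j)) := by
      rcases Nat.eq_zero_or_pos j with h0 | hjpos
      · right
        have hz : dist (f (i - j)) = 0 := by omega
        obtain ⟨g, hg0, hgP, -⟩ := (hdist (f (i - j))).1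
        rw [hz] at hgP
        rw [← hg0]
        exact hgP
      · left
        rcases hj_pred with h0 | ⟨h1, h2⟩
        · omega
        have hin : f (i - j) ∈ L j := by
          have hm := hmemL (f (i - j)); rwa [hdw] at hm
        obtain ⟨j', hjj⟩ : ∃ j', j = j' + 1 := ⟨j - 1, by omega⟩
        have hLsub : L j ⊆ (greedy L φ j).1 := by
          rw [hjj, greedy_succ, if_pos (by rw [hjj] at h2; simpa using h2)]
          exact subset_union_right
        rw [hS]
        exact greedy_mono L φ (le_trans hj_le hil) (hLsub hin)
    refine ⟨i - j, ⟨f, hf0, hend, hfe⟩, ?_⟩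
    have h1le : (1:ℝ) ≤ ((greedy L φ j).2.card : ℝ) := by
      rw [hUj]
      have hin : f (i - j) ∈ L j := by
        have hm := hmemL (f (i - j)); rwa [hdw] at hm
      have := Finset.card_pos.mpr ⟨_, hin⟩
      exact_mod_cast this
    have hno : ∀ t, j ≤ t → t < j + (i - j) →
        ¬ ((L (t + 1)).card : ℝ) < φ * ((greedy L φ t).2.card : ℝ) := by
      intro t ht ht' hc
      exact hj_max (t + 1) (by omega) (by omega)
        (Or.inr ⟨by omega, by simpa using hc⟩)
    have hgrow := greedy_growth_iter L φ hφ0 hdisj j (i - j) hno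
    rw [show j + (i - j) = i from by omega] at hgrow
    have hUi := hUniv (greedy L φ i).2
    have hpow : (1 + φ) ^ (i - j) ≤ (n : ℝ) + 2 := by
      have h0 : (0:ℝ) < (1 + φ) ^ (i - j) := by positivity
      nlinarith
    have h2phi : (2:ℝ) ^ φ ≤ 1 + φ := by
      have h := rpow_one_add_le_one_add_mul_self (s := 1) (by norm_num) hφ0.le hφ1.le
      norm_num at h
      linarith
    have hrp : (2:ℝ) ^ (φ * ((i - j : ℕ) : ℝ)) ≤ (n : ℝ) + 2 := by
      rw [Real.rpow_mul (by norm_num), Real.rpow_natCast]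
      calc ((2:ℝ) ^ φ) ^ (i - j) ≤ (1 + φ) ^ (i - j) := by
            apply pow_le_pow_left₀ (by positivity) h2phi
        _ ≤ (n : ℝ) + 2 := hpow
    have hlogb : φ * ((i - j : ℕ) : ℝ) ≤ Real.logb 2 ((n : ℝ) + 2) := by
      have hx : (0:ℝ) < (n : ℝ) + 2 := by positivity
      rw [← Real.rpow_le_rpow_left_iff (x := (2:ℝ)) (by norm_num : (1:ℝ) < 2),
        Real.rpow_logb (by norm_num) (by norm_num) hx]
      exact hrp
    rw [le_div_iff₀ hφ0]
    linarith
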